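/- Let p : E → ℂ∖{0} be a Hurewicz fibration onto the punctured complex plane, with E nonempty. If the fiber F = p⁻¹(1) is path-connected, then p admits a continuous (global) cross-section: there exists a continuous map s : ℂ∖{0} → E with p ∘ s = id. -/

import Mathlib

open Topology unitInterval

/-- Two maps `f g : A → B` are (freely) homotopic. -/
def MapsHomotopic {A B : Type*} [TopologicalSpace A] [TopologicalSpace B]
    (f g : A → B) : Prop :=
  ∃ H : A × unitInterval → B, Continuous H ∧ (∀ a, H (a, 0) = f a) ∧ (∀ a, H (a, 1) = g a)

/-- A continuous local section of `q` over the subset `U`. -/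
def HasLocalSection {E B : Type*} [TopologicalSpace E] [TopologicalSpace B]
    (q : E → B) (U : Set B) : Prop :=
  ∃ s : U → E, Continuous s ∧ ∀ u : U, q (s u) = (u : B)

/-- The sectional number `sec_op(q)`: the least `n` such that `B` is covered by `n`
open sets each admitting a continuous local section of `q`. -/
noncomputable def secOp {E B : Type*} [TopologicalSpace E] [TopologicalSpace B]
    (q : E → B) : ℕ∞ :=
  sInf ((fun n : ℕ => (n : ℕ∞)) '' {n : ℕ | ∃ U : Fin n → Set B,
    (∀ i, IsOpen (U i)) ∧ (⋃ i, U i) = Set.univ ∧ ∀ i, HasLocalSection q (U i)})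

/-- A homotopy local section of `q` over `U`: a continuous `s : U → E` with `q ∘ s`
homotopic to the inclusion. -/
def HasHtpyLocalSection {E B : Type*} [TopologicalSpace E] [TopologicalSpace B]
    (q : E → B) (U : Set B) : Prop :=
  ∃ s : U → E, Continuous s ∧ MapsHomotopic (fun u => q (s u)) (fun u : U => (u : B))

/-- The Schwarz genus of `q`. -/
noncomputable def schwarzGenus {E B : Type*} [TopologicalSpace E] [TopologicalSpace B]
    (q : E → B) : ℕ∞ :=
  sInf ((fun n : ℕ => (n : ℕ∞)) '' {n : ℕ | ∃ U : Fin n → Set B,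
    (∀ i, IsOpen (U i)) ∧ (⋃ i, U i) = Set.univ ∧ ∀ i, HasHtpyLocalSection q (U i)})

/-- Hurewicz fibration: homotopy lifting property with respect to all topological spaces. -/
def IsHurewiczFibration {E B : Type*} [TopologicalSpace E] [TopologicalSpace B]
    (p : E → B) : Prop :=
  ∀ (X : Type*) [TopologicalSpace X] (h : X → E) (H : X × unitInterval → B),
    Continuous h → Continuous H → (∀ x, H (x, 0) = p (h x)) →
      ∃ H' : X × unitInterval → E, Continuous H' ∧ (∀ y, p (H' y) = H y) ∧
        ∀ x, H' (x, 0) = h x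

/-- The topological complexity of a map `q : Y → Z`: the least `n` such that `Y × Z`
is covered by `n` open sets each admitting a continuous local section of
`e_q : PY → Y × Z`, `γ ↦ (γ(0), q(γ(1)))`. -/
noncomputable def topComplexity {Y Z : Type*} [TopologicalSpace Y] [TopologicalSpace Z]
    (q : Y → Z) : ℕ∞ :=
  sInf ((fun n : ℕ => (n : ℕ∞)) '' {n : ℕ | ∃ U : Fin n → Set (Y × Z),
    (∀ i, IsOpen (U i)) ∧ (⋃ i, U i) = Set.univ ∧
    ∀ i, ∃ s : U i → C(unitInterval, Y), Continuous s ∧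
      ∀ u : U i, ((s u) 0, q ((s u) 1)) = (u : Y × Z)})

noncomputable def gammaLoop : ℝ → {z : ℂ // z ≠ 0} :=
  fun u => ⟨Complex.exp (↑(2 * Real.pi * u) * Complex.I), Complex.exp_ne_zero _⟩

lemma gammaLoop_continuous : Continuous gammaLoop := by
  apply Continuous.subtype_mk
  exact Complex.continuous_exp.comp (by continuity)

lemma gammaLoop_zero : gammaLoop 0 = ⟨1, one_ne_zero⟩ := by
  apply Subtype.ext
  simp [gammaLoop]

lemma gammaLoop_one : gammaLoop 1 = ⟨1, one_ne_zero⟩ := by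
  apply Subtype.ext
  show Complex.exp (↑(2 * Real.pi * 1) * Complex.I) = 1
  have : (↑(2 * Real.pi * 1) : ℂ) * Complex.I = 2 * Real.pi * Complex.I := by
    push_cast; ring
  rw [this, Complex.exp_two_pi_mul_I]

lemma gammaLoop_coe_div (x : ℝ) :
    (gammaLoop (x / (2 * Real.pi)) : ℂ) = Complex.exp (↑x * Complex.I) := by
  have h2 : (2 * Real.pi) ≠ 0 := by positivity
  show Complex.exp _ = _
  congr 2
  rw [mul_div_cancel₀ _ h2]

set_option maxHeartbeats 1000000 in
/-- a Hurewicz fibration over the punctured complex plane with nonempty total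
space and path-connected fiber over `1` admits a continuous global cross-section. -/
theorem stmt6 {E : Type*} [TopologicalSpace E] [Nonempty E]
    (p : E → {z : ℂ // z ≠ 0})
    (hp : Continuous p) (hfib : IsHurewiczFibration p)
    (hF : IsPathConnected (p ⁻¹' {(⟨1, one_ne_zero⟩ : {z : ℂ // z ≠ 0})})) :
    ∃ s : {z : ℂ // z ≠ 0} → E, Continuous s ∧ ∀ z, p (s z) = z := by
  classical
  haveI : Fact (0 < 2 * Real.pi) := ⟨by positivity⟩
  have h2π : (2 * Real.pi) ≠ 0 := by positivity
  set one' : {z : ℂ // z ≠ 0} := ⟨1, one_ne_zero⟩ with hone'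
  -- step 1: lift the standard loop
  obtain ⟨e₀, he₀, hjoin⟩ := hF
  have hpe₀ : p e₀ = one' := by simpa using he₀
  obtain ⟨D, hDcont, hpD, hD0⟩ := hfib PUnit (fun _ => e₀) (fun y => gammaLoop (y.2 : ℝ))
    continuous_const (gammaLoop_continuous.comp (continuous_subtype_val.comp continuous_snd))
    (fun x => by
      show gammaLoop ((0 : I) : ℝ) = p e₀
      rw [hpe₀]
      simpa using gammaLoop_zero)
  set δ : I → E := fun t => D (PUnit.unit, t) with hδ
  have hδcont : Continuous δ := hDcont.comp (by continuity)
  have hpδ : ∀ t : I, p (δ t) = gammaLoop (t : ℝ) := fun t => hpD (PUnit.unit, t)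
  have hδ0 : δ 0 = e₀ := hD0 PUnit.unit
  -- step 2: close the lifted path up in the fiber
  have hδ1mem : δ 1 ∈ p ⁻¹' {one'} := by
    have : p (δ 1) = gammaLoop ((1 : I) : ℝ) := hpδ 1
    simp only [Set.mem_preimage, Set.mem_singleton_iff, this]
    simpa using gammaLoop_one
  obtain ⟨A, hA⟩ := hjoin hδ1mem
  set Pδ : Path e₀ (δ 1) :=
    { toFun := δ, continuous_toFun := hδcont, source' := hδ0, target' := rfl } with hPδ
  set β : Path e₀ e₀ := Pδ.trans A.symm with hβ
  have hpβ : ∀ t : I, p (β t) = gammaLoop (min (2 * (t : ℝ)) 1) := by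
    intro t
    rw [hβ, Path.trans_apply]
    split_ifs with h
    · have h1 : min (2 * (t : ℝ)) 1 = 2 * (t : ℝ) := min_eq_left (by linarith)
      rw [h1]
      exact hpδ _
    · have h1 : min (2 * (t : ℝ)) 1 = 1 := min_eq_right (by push_neg at h; linarith)
      rw [h1]
      have := hA (σ ⟨2 * (t : ℝ) - 1, by constructor <;> [push_neg at h; skip] <;>
        [linarith; linarith [t.2.2]]⟩)
      have h2 : p (A.symm ⟨2 * (t : ℝ) - 1, _⟩) = one' := this
      rw [h2]
      exact gammaLoop_one.symm
  -- step 3: descend to the angle circle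
  set q : ℝ → E := fun x => β (Set.projIcc 0 1 zero_le_one (x / (2 * Real.pi))) with hq
  have hqcont : Continuous q :=
    β.continuous.comp (continuous_projIcc.comp (continuous_id.div_const _))
  have hq_eq : q 0 = q (2 * Real.pi) := by
    rw [hq]
    simp only [zero_div, div_self h2π]
    rw [Set.projIcc_left, Set.projIcc_right]
    simp
  set c : AddCircle (2 * Real.pi) → E := AddCircle.liftIco (2 * Real.pi) 0 q with hc
  have hccont : Continuous c := AddCircle.liftIco_zero_continuous hq_eq hqcont.continuousOn
  set rep : AddCircle (2 * Real.pi) → ℝ :=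
    fun θ => ((AddCircle.equivIco (2 * Real.pi) 0 θ : Set.Ico (0:ℝ) (0 + 2 * Real.pi)) : ℝ)
    with hrepdef
  have hrep_mem : ∀ θ, rep θ ∈ Set.Ico (0:ℝ) (2 * Real.pi) := fun θ => by
    obtain ⟨ha, hb⟩ := (AddCircle.equivIco (2 * Real.pi) 0 θ).2
    exact ⟨ha, by linarith⟩
  have hrep_coe : ∀ θ, ((rep θ : ℝ) : AddCircle (2 * Real.pi)) = θ := fun θ =>
    (AddCircle.equivIco (2 * Real.pi) 0).symm_apply_apply θ
  have hc_apply : ∀ θ, c θ = q (rep θ) := fun θ => rfl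
  -- step 4: the homotopy on the circle between p ∘ c and the inclusion
  set gfun : ℝ → I → {z : ℂ // z ≠ 0} := fun x s =>
    gammaLoop ((1 - (s : ℝ)) * min (2 * (x / (2 * Real.pi))) 1 + (s : ℝ) * (x / (2 * Real.pi)))
    with hgfun
  have hgcont : Continuous (fun y : ℝ × I => gfun y.1 y.2) := by
    apply gammaLoop_continuous.comp
    fun_prop
  set gRC : C(ℝ, C(I, {z : ℂ // z ≠ 0})) :=
    ContinuousMap.curry ⟨fun y => gfun y.1 y.2, hgcont⟩ with hgRC
  set gR : ℝ → C(I, {z : ℂ // z ≠ 0}) := fun x => gRC x with hgR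
  have hgRcont : Continuous gR := gRC.continuous
  have hgR_eq : gR 0 = gR (2 * Real.pi) := by
    ext s
    have hgg : gfun 0 s = gfun (2 * Real.pi) s := by
      rw [hgfun]
      simp only [zero_div, div_self h2π, mul_zero, min_self]
      norm_num
      rw [gammaLoop_zero, gammaLoop_one]
    exact congrArg Subtype.val hgg
  set G0 : AddCircle (2 * Real.pi) → C(I, {z : ℂ // z ≠ 0}) :=
    AddCircle.liftIco (2 * Real.pi) 0 gR with hG0
  have hG0cont : Continuous G0 := AddCircle.liftIco_zero_continuous hgR_eq hgRcont.continuousOn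
  have hG0_apply : ∀ θ, G0 θ = gR (rep θ) := fun θ => rfl
  -- step 5: the angle map
  set az : {z : ℂ // z ≠ 0} → AddCircle (2 * Real.pi) :=
    fun z => ((Complex.arg (z : ℂ) : ℝ) : Real.Angle) with haz
  have hazcont : Continuous az := by
    rw [continuous_iff_continuousAt]
    intro z
    exact (Complex.continuousAt_arg_coe_angle z.2).comp continuousAt_subtype_val
  set f : {z : ℂ // z ≠ 0} → E := fun z => c (az z) with hf
  have hfcont : Continuous f := hccont.comp hazcont
  -- step 6: the full homotopy from p ∘ f to the identity
  have hlog : Continuous fun z : {z : ℂ // z ≠ 0} => Real.log ‖(z : ℂ)‖ := by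
    rw [continuous_iff_continuousAt]
    intro z
    exact (Real.continuousAt_log (by simpa using z.2)).comp
      ((continuous_norm.comp continuous_subtype_val).continuousAt)
  set Hfull : {z : ℂ // z ≠ 0} × I → {z : ℂ // z ≠ 0} := fun y =>
    ⟨(G0 (az y.1) y.2 : ℂ) * (Real.exp ((y.2 : ℝ) * Real.log ‖(y.1 : ℂ)‖) : ℂ),
      mul_ne_zero (G0 (az y.1) y.2).2 (by exact_mod_cast (Real.exp_pos _).ne')⟩ with hHfull
  have hHfullcont : Continuous Hfull := by
    apply Continuous.subtype_mk
    apply Continuous.mul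
    · exact continuous_subtype_val.comp
        ((hG0cont.comp (hazcont.comp continuous_fst)).eval
          continuous_snd)
    · exact Complex.continuous_ofReal.comp
        (Real.continuous_exp.comp ((continuous_subtype_val.comp continuous_snd).mul
          (hlog.comp continuous_fst)))
  have hrep_div_mem : ∀ θ, rep θ / (2 * Real.pi) ∈ Set.Icc (0:ℝ) 1 := by
    intro θ
    obtain ⟨h1, h2⟩ := hrep_mem θ
    constructor
    · positivity
    · rw [div_le_one (by positivity)]
      linarith
  have hH0 : ∀ z, Hfull (z, 0) = p (f z) := by
    intro z
    have h1 : p (f z) = gammaLoop (min (2 * (rep (az z) / (2 * Real.pi))) 1) := by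
      show p (β (Set.projIcc 0 1 zero_le_one (rep (az z) / (2 * Real.pi)))) = _
      rw [Set.projIcc_of_mem zero_le_one (hrep_div_mem (az z))]
      exact hpβ _
    apply Subtype.ext
    show (G0 (az z) 0 : ℂ) * _ = (p (f z) : ℂ)
    rw [h1]
    have h2 : G0 (az z) 0 = gammaLoop (min (2 * (rep (az z) / (2 * Real.pi))) 1) := by
      rw [hG0_apply]
      show gfun (rep (az z)) 0 = _
      rw [hgfun]
      norm_num
    rw [h2]
    norm_num
  have hH1 : ∀ z, Hfull (z, 1) = z := by
    intro z
    apply Subtype.ext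
    show (G0 (az z) 1 : ℂ) * _ = (z : ℂ)
    have h2 : G0 (az z) 1 = gammaLoop (rep (az z) / (2 * Real.pi)) := by
      rw [hG0_apply]
      show gfun (rep (az z)) 1 = _
      rw [hgfun]
      norm_num
    obtain ⟨n, hn⟩ : ∃ n : ℤ, n • (2 * Real.pi) = rep (az z) - Complex.arg (z : ℂ) := by
      have h3 : ((rep (az z) : ℝ) : AddCircle (2 * Real.pi))
          = ((Complex.arg (z : ℂ) : ℝ) : AddCircle (2 * Real.pi)) := hrep_coe (az z)
      have h4 := (QuotientAddGroup.eq_iff_sub_mem).mp h3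
      exact AddSubgroup.mem_zmultiples_iff.mp h4
    have hrepeq : rep (az z) = Complex.arg (z : ℂ) + n * (2 * Real.pi) := by
      rw [zsmul_eq_mul] at hn
      linarith
    have h5 : (gammaLoop (rep (az z) / (2 * Real.pi)) : ℂ)
        = Complex.exp ((Complex.arg (z : ℂ) : ℂ) * Complex.I) := by
      rw [gammaLoop_coe_div, hrepeq]
      push_cast
      rw [add_mul, Complex.exp_add]
      have h6 : ((n : ℂ) * (2 * (Real.pi : ℂ))) * Complex.I = n * (2 * Real.pi * Complex.I) := by
        ring
      rw [h6, Complex.exp_int_mul_two_pi_mul_I, mul_one]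
    rw [h2, h5]
    have h7 : Real.exp (((1:I) : ℝ) * Real.log ‖(z : ℂ)‖) = ‖(z : ℂ)‖ := by
      rw [Set.Icc.coe_one, one_mul, Real.exp_log (norm_pos_iff.mpr z.2)]
    rw [h7, mul_comm]
    exact Complex.norm_mul_exp_arg_mul_I (z : ℂ)
  -- step 7: lift the homotopy
  obtain ⟨H', hH'cont, hpH', _⟩ := hfib (ULift {z : ℂ // z ≠ 0})
    (fun x => f x.down) (fun y => Hfull (y.1.down, y.2))
    (hfcont.comp continuous_uliftDown)
    (hHfullcont.comp ((continuous_uliftDown.comp continuous_fst).prodMk continuous_snd))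
    (fun x => hH0 x.down)
  refine ⟨fun z => H' (ULift.up z, 1), hH'cont.comp (by continuity), fun z => ?_⟩
  rw [hpH' (ULift.up z, 1)]
  exact hH1 z
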